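/- Let B be a set of index pairs (i,j), 1 ≤ i < j ≤ n, such that the associated graph G_B on {1,...,n} is disconnected (e.g., if |B| ≤ n-2 this may occur). If G_B is disconnected, then there exist two distinct consistent n×n pairwise comparison matrices M and M' that agree on all entries indexed by B. Hence no set B with disconnected G_B determines a consistent PC matrix. -/

import Mathlib

/-- The graph on `Fin n` associated to a set `B` of index pairs. -/
def genGraph (n : ℕ) (B : Finset (Fin n × Fin n)) : SimpleGraph (Fin n) :=
  SimpleGraph.fromEdgeSet ((fun p : Fin n × Fin n => s(p.1, p.2)) '' (B : Set (Fin n × Fin n)))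

/-- If the graph associated to `B` is disconnected, then `B` does not determine
a consistent PC matrix: there are two distinct consistent PC matrices agreeing
on all entries indexed by `B`. -/
theorem exists_distinct_consistent_of_disconnected (n : ℕ) (hn : 1 ≤ n)
    (B : Finset (Fin n × Fin n)) (hB : ∀ p ∈ B, p.1 < p.2)
    (hdisc : ¬ (genGraph n B).Connected) :
    ∃ M M' : Matrix (Fin n) (Fin n) ℝ,
      (∀ i j, 0 < M i j) ∧ (∀ i j k, M i j * M j k = M i k) ∧
      (∀ i j, 0 < M' i j) ∧ (∀ i j k, M' i j * M' j k = M' i k) ∧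
      (∀ p ∈ B, M p.1 p.2 = M' p.1 p.2) ∧ M ≠ M' := by
  have hne : Nonempty (Fin n) := ⟨⟨0, hn⟩⟩
  have hpre : ¬ (genGraph n B).Preconnected := by
    intro h; exact hdisc (SimpleGraph.Connected.mk h)
  simp only [SimpleGraph.Preconnected] at hpre
  push_neg at hpre
  obtain ⟨u, v, huv⟩ := hpre
  classical
  set f : Fin n → ℝ := fun i => if (genGraph n B).Reachable u i then 1 else 2 with hf
  have hfpos : ∀ i, 0 < f i := by
    intro i; simp only [hf]; split <;> norm_num
  refine ⟨Matrix.of (fun _ _ => (1:ℝ)), Matrix.of (fun i j => f i / f j), ?_, ?_, ?_, ?_, ?_, ?_⟩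
  · intro i j; norm_num
  · intro i j k; simp
  · intro i j; exact div_pos (hfpos i) (hfpos j)
  · intro i j k
    simp only [Matrix.of_apply]
    field_simp [(hfpos j).ne', (hfpos k).ne']
  · intro p hp
    have hadj : (genGraph n B).Adj p.1 p.2 := by
      refine (SimpleGraph.fromEdgeSet_adj _).mpr ⟨⟨p, hp, rfl⟩, (hB p hp).ne⟩
    have hr : (genGraph n B).Reachable u p.1 ↔ (genGraph n B).Reachable u p.2 :=
      ⟨fun h => h.trans hadj.reachable, fun h => h.trans hadj.symm.reachable⟩
    have hfp : f p.1 = f p.2 := by simp only [hf]; rw [if_congr hr rfl rfl]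
    simp [hfp, div_self (hfpos p.2).ne']
  · intro h
    have heq : (1:ℝ) = f u / f v := congrFun (congrFun h u) v
    have h1 : f u = 1 := by simp [hf, SimpleGraph.Reachable.refl]
    have h2 : f v = 2 := by simp [hf, huv]
    rw [h1, h2] at heq
    norm_num at heq
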